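/- arXiv:2009.13378 — 4 statements merged into one kernel-verified Lean document; each statement's English description precedes it below -/
import Mathlib

section
/- The function P₀(x) = (x·coth(x) − 1)/x² satisfies 0 < P₀(x) < 1/3 for all x > 0. -/
open Real

lemma pos_of_deriv (f f' : ℝ → ℝ) (hd : ∀ x, HasDerivAt f (f' x) x)
    (h0 : f 0 = 0) (hp : ∀ x, 0 < x → 0 < f' x) : ∀ x, 0 < x → 0 < f x := by
  intro x hx
  have hmono : StrictMonoOn f (Set.Ici 0) := by
    apply strictMonoOn_of_hasDerivWithinAt_pos (convex_Ici 0)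
      (fun y hy => (hd y).continuousAt.continuousWithinAt)
      (fun y hy => ((hd y).hasDerivWithinAt))
    · intro y hy
      exact hp y (by simpa using hy)
  have := hmono (Set.self_mem_Ici) (Set.mem_Ici.mpr hx.le) hx
  simpa [h0] using this

lemma sinh_lt_mul_cosh {x : ℝ} (hx : 0 < x) : Real.sinh x < x * Real.cosh x := by
  have := pos_of_deriv (fun y => y * Real.cosh y - Real.sinh y)
    (fun y => y * Real.sinh y)
    (fun y => by
      have h1 : HasDerivAt (fun y : ℝ => y * Real.cosh y - Real.sinh y)
          (1 * Real.cosh y + y * Real.sinh y - Real.cosh y) y := by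
        exact ((hasDerivAt_id y).mul (Real.hasDerivAt_cosh y)).sub (Real.hasDerivAt_sinh y)
      convert h1 using 1; ring)
    (by simp) (fun y hy => mul_pos hy ((Real.sinh_pos_iff.mpr hy))) x hx
  have h2 : 0 < x * Real.cosh x - Real.sinh x := this
  linarith

lemma key_ineq {x : ℝ} (hx : 0 < x) :
    3 * (x * Real.cosh x - Real.sinh x) < x ^ 2 * Real.sinh x := by
  have := pos_of_deriv (fun y => y ^ 2 * Real.sinh y - 3 * (y * Real.cosh y - Real.sinh y))
    (fun y => y * (y * Real.cosh y - Real.sinh y))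
    (fun y => by
      have h1 : HasDerivAt (fun y : ℝ => y ^ 2 * Real.sinh y - 3 * (y * Real.cosh y - Real.sinh y))
          (2 * y ^ 1 * Real.sinh y + y ^ 2 * Real.cosh y -
            3 * ((1 * Real.cosh y + y * Real.sinh y) - Real.cosh y)) y := by
        exact (((hasDerivAt_pow 2 y).mul (Real.hasDerivAt_sinh y)).sub
          ((HasDerivAt.const_mul 3 (((hasDerivAt_id y).mul (Real.hasDerivAt_cosh y)).sub (Real.hasDerivAt_sinh y)))))
      convert h1 using 1; ring)
    (by simp) (fun y hy => mul_pos hy (by linarith [sinh_lt_mul_cosh hy])) x hx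
  have h2 : 0 < x ^ 2 * Real.sinh x - 3 * (x * Real.cosh x - Real.sinh x) := this
  linarith

noncomputable def P0 (x : ℝ) : ℝ := (x * (Real.cosh x / Real.sinh x) - 1) / x ^ 2

theorem P0_pos_lt_third : ∀ x : ℝ, 0 < x → 0 < P0 x ∧ P0 x < 1 / 3 := by
  intro x hx
  have hs := (Real.sinh_pos_iff.mpr hx)
  have h1 := sinh_lt_mul_cosh hx
  have h2 := key_ineq hx
  have hx2 : (0:ℝ) < x ^ 2 := by positivity
  unfold P0
  constructor
  · apply div_pos _ hx2
    rw [sub_pos, ← mul_div_assoc, lt_div_iff₀ hs]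
    linarith
  · rw [div_lt_div_iff₀ hx2 (by norm_num : (0:ℝ) < 3)]
    have heq : x * (Real.cosh x / Real.sinh x) - 1 = (x * Real.cosh x - Real.sinh x) / Real.sinh x := by
      field_simp
    rw [heq, div_mul_eq_mul_div, div_lt_iff₀ hs]
    nlinarith [h2]
end

section
/- The function P₀(x) = (x·coth(x) − 1)/x² is strictly decreasing on (0,∞). -/
open Real

lemma pos_of_deriv_pos (g g' : ℝ → ℝ) (hg : ∀ x, HasDerivAt g (g' x) x)
    (h0 : g 0 = 0) (hpos : ∀ x > 0, 0 < g' x) : ∀ x > 0, 0 < g x := by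
  intro x hx
  have hmono : StrictMonoOn g (Set.Ici 0) := by
    apply strictMonoOn_of_deriv_pos (convex_Ici 0)
      (fun y _ => (hg y).continuousAt.continuousWithinAt)
    intro y hy
    rw [interior_Ici] at hy
    rw [(hg y).deriv]
    exact hpos y hy
  have := hmono (Set.self_mem_Ici) (Set.mem_Ici.2 hx.le) hx
  rwa [h0] at this

lemma aux1 : ∀ x > 0, 0 < x * Real.cosh x - Real.sinh x := by
  apply pos_of_deriv_pos _ (fun x => x * Real.sinh x)
  · intro x
    have h : HasDerivAt (fun x : ℝ => x * Real.cosh x - Real.sinh x)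
        (1 * Real.cosh x + x * Real.sinh x - Real.cosh x) x :=
      ((hasDerivAt_id x).mul (Real.hasDerivAt_cosh x)).sub (Real.hasDerivAt_sinh x)
    convert h using 1; ring
  · simp
  · intro x hx; exact mul_pos hx (Real.sinh_pos_iff.2 hx)

lemma aux2 : ∀ x > 0, 0 < 2 * x + x * Real.cosh x ^ 2 + x * Real.sinh x ^ 2
    - 3 * Real.sinh x * Real.cosh x := by
  apply pos_of_deriv_pos _
    (fun x => 4 * Real.sinh x * (x * Real.cosh x - Real.sinh x))
  · intro x
    have h : HasDerivAt (fun x : ℝ => 2 * x + x * Real.cosh x ^ 2 + x * Real.sinh x ^ 2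
        - 3 * Real.sinh x * Real.cosh x)
        (2 * 1 + (1 * Real.cosh x ^ 2 + x * (2 * Real.cosh x ^ 1 * Real.sinh x))
          + (1 * Real.sinh x ^ 2 + x * (2 * Real.sinh x ^ 1 * Real.cosh x))
          - (3 * Real.cosh x * Real.cosh x + 3 * Real.sinh x * Real.sinh x)) x := by
      have hc2 : HasDerivAt (fun x : ℝ => Real.cosh x ^ 2)
          (2 * Real.cosh x ^ 1 * Real.sinh x) x := (Real.hasDerivAt_cosh x).pow 2
      have hs2 : HasDerivAt (fun x : ℝ => Real.sinh x ^ 2)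
          (2 * Real.sinh x ^ 1 * Real.cosh x) x := (Real.hasDerivAt_sinh x).pow 2
      have h1 := ((((hasDerivAt_id x).const_mul (2:ℝ)).add
        ((hasDerivAt_id x).mul hc2)).add ((hasDerivAt_id x).mul hs2)).sub
        ((((Real.hasDerivAt_sinh x).const_mul (3:ℝ))).mul (Real.hasDerivAt_cosh x))
      convert h1 using 2 <;> first | rfl | (simp <;> ring)
    convert h using 1
    have := Real.cosh_sq x
    nlinarith [Real.cosh_sq x]
  · simp
  · intro x hx
    have := aux1 x hx
    have hs := Real.sinh_pos_iff.2 hx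
    positivity
  
lemma aux3 : ∀ x > 0, 0 < x ^ 2 + x * Real.sinh x * Real.cosh x - 2 * Real.sinh x ^ 2 := by
  apply pos_of_deriv_pos _
    (fun x => 2 * x + x * Real.cosh x ^ 2 + x * Real.sinh x ^ 2
      - 3 * Real.sinh x * Real.cosh x)
  · intro x
    have h : HasDerivAt (fun x : ℝ => x ^ 2 + x * Real.sinh x * Real.cosh x
        - 2 * Real.sinh x ^ 2)
        ((2 * x ^ 1) + ((1 * Real.sinh x + x * Real.cosh x) * Real.cosh x
          + x * Real.sinh x * Real.sinh x)
          - 2 * (2 * Real.sinh x ^ 1 * Real.cosh x)) x := by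
      exact ((hasDerivAt_pow 2 x).add
        (((hasDerivAt_id x).mul (Real.hasDerivAt_sinh x)).mul (Real.hasDerivAt_cosh x))).sub
        (((Real.hasDerivAt_sinh x).pow 2).const_mul 2)
    convert h using 1
    nlinarith [Real.cosh_sq x]
  · simp
  · exact aux2

lemma P0_hasDerivAt (x : ℝ) (hx : 0 < x) :
    HasDerivAt P0
      (-(x ^ 2 + x * Real.sinh x * Real.cosh x - 2 * Real.sinh x ^ 2)
        / (Real.sinh x ^ 2 * x ^ 3)) x := by
  have hs : Real.sinh x ≠ 0 := (Real.sinh_pos_iff.2 hx).ne'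
  have hq : HasDerivAt (fun x => Real.cosh x / Real.sinh x)
      ((Real.sinh x * Real.sinh x - Real.cosh x * Real.cosh x) / Real.sinh x ^ 2) x :=
    (Real.hasDerivAt_cosh x).div (Real.hasDerivAt_sinh x) hs
  have hu : HasDerivAt (fun x => x * (Real.cosh x / Real.sinh x) - 1)
      (1 * (Real.cosh x / Real.sinh x)
        + x * ((Real.sinh x * Real.sinh x - Real.cosh x * Real.cosh x) / Real.sinh x ^ 2)) x :=
    ((hasDerivAt_id x).mul hq).sub_const 1
  have hP := hu.div (hasDerivAt_pow 2 x) (pow_ne_zero 2 hx.ne')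
  convert hP using 1
  · rfl
  · rfl
  · rfl
  rw [show Real.sinh x * Real.sinh x - Real.cosh x * Real.cosh x = -1 from by
    nlinarith [Real.cosh_sq x]]
  field_simp
  ring

theorem P0_strictAntiOn : StrictAntiOn P0 (Set.Ioi (0 : ℝ)) := by
  apply strictAntiOn_of_deriv_neg (convex_Ioi 0)
  · intro x hx
    exact (P0_hasDerivAt x hx).continuousAt.continuousWithinAt
  · intro x hx
    rw [interior_Ioi] at hx
    rw [(P0_hasDerivAt x hx).deriv]
    apply div_neg_of_neg_of_pos
    · linarith [aux3 x hx]
    · have hs := Real.sinh_pos_iff.2 hx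
      exact mul_pos (pow_pos hs 2) (pow_pos hx 3)
end

section
/- Let Φ : ℝ → ℝ be continuous, positive, and T-periodic with T > 0, let μ > 0 and σ̃ > 0, and let R : [0,∞) → ℝ be a positive solution of R'(t) = μ R(t)(Φ(t) P₀(R(t)) − σ̃/3), where P₀(x) = (x·coth(x) − 1)/x². Then R(t + T) ≤ R(t) for all t ≥ 0, provided σ̃ = (1/T)∫₀ᵀ Φ(t) dt. -/
lemma sinh_le_mul_cosh {x : ℝ} (hx : 0 ≤ x) : Real.sinh x ≤ x * Real.cosh x := by
  have key : MonotoneOn (fun y : ℝ => y * Real.cosh y - Real.sinh y) (Set.Ici 0) := by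
    apply monotoneOn_of_deriv_nonneg (convex_Ici 0)
    · fun_prop
    · apply Differentiable.differentiableOn; fun_prop
    · intro y hy
      rw [interior_Ici] at hy
      have h : HasDerivAt (fun y : ℝ => y * Real.cosh y - Real.sinh y) (y * Real.sinh y) y := by
        have := ((hasDerivAt_id y).mul (Real.hasDerivAt_cosh y)).sub (Real.hasDerivAt_sinh y)
        refine this.congr_deriv ?_
        simp [Real.cosh_sq, Real.sinh_sq]
      rw [h.deriv]
      exact mul_nonneg (le_of_lt hy) (Real.sinh_pos_iff.2 hy).le
  have h0 := key (Set.self_mem_Ici) (Set.mem_Ici.2 hx) hx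
  simpa using h0

lemma aux_ineq {x : ℝ} (hx : 0 ≤ x) : 3 * x * Real.cosh x ≤ (3 + x ^ 2) * Real.sinh x := by
  have key : MonotoneOn (fun y : ℝ => (3 + y ^ 2) * Real.sinh y - 3 * y * Real.cosh y)
      (Set.Ici 0) := by
    apply monotoneOn_of_deriv_nonneg (convex_Ici 0)
    · fun_prop
    · apply Differentiable.differentiableOn; fun_prop
    · intro y hy
      rw [interior_Ici] at hy
      have h : HasDerivAt (fun y : ℝ => (3 + y ^ 2) * Real.sinh y - 3 * y * Real.cosh y)
          (y * (y * Real.cosh y - Real.sinh y)) y := by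
        have h1 : HasDerivAt (fun y : ℝ => (3 + y ^ 2)) (2 * y) y := by
          simpa using ((hasDerivAt_pow 2 y).const_add 3)
        have h2 : HasDerivAt (fun y : ℝ => 3 * y) 3 y := by
          simpa using (hasDerivAt_id y).const_mul 3
        have := (h1.mul (Real.hasDerivAt_sinh y)).sub (h2.mul (Real.hasDerivAt_cosh y))
        refine this.congr_deriv ?_
        ring
      rw [h.deriv]
      have := sinh_le_mul_cosh hy.le
      nlinarith [(Set.mem_Ioi.mp hy).le]
  have h0 := key (Set.self_mem_Ici) (Set.mem_Ici.2 hx) hx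
  simp at h0
  nlinarith [h0]

lemma P0_le_third {x : ℝ} (hx : 0 < x) : P0 x ≤ 1 / 3 := by
  have hs : 0 < Real.sinh x := Real.sinh_pos_iff.2 hx
  have h := aux_ineq hx.le
  rw [P0, div_le_iff₀ (by positivity : (0:ℝ) < x ^ 2), sub_le_iff_le_add,
    ← mul_div_assoc, div_le_iff₀ hs]
  nlinarith

theorem R_decreasing_over_period
    (T : ℝ) (hT : 0 < T) (Φ : ℝ → ℝ) (hΦc : Continuous Φ)
    (hΦpos : ∀ t, 0 < Φ t) (hΦper : ∀ t, Φ (t + T) = Φ t)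
    (μ σ : ℝ) (hμ : 0 < μ) (hσ : 0 < σ)
    (hmean : σ = (1 / T) * ∫ t in (0 : ℝ)..T, Φ t)
    (R : ℝ → ℝ) (hRpos : ∀ t, 0 ≤ t → 0 < R t)
    (hODE : ∀ t, 0 ≤ t → HasDerivAt R (μ * R t * (Φ t * P0 (R t) - σ / 3)) t) :
    ∀ t, 0 ≤ t → R (t + T) ≤ R t := by
  intro t ht
  have htT : t ≤ t + T := by linarith
  have huIcc : Set.uIcc t (t + T) = Set.Icc t (t + T) := Set.uIcc_of_le htT
  set f : ℝ → ℝ := fun s => μ * (Φ s * P0 (R s) - σ / 3) with hf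
  -- log R has derivative f on [t, t+T]
  have hL : ∀ s ∈ Set.uIcc t (t + T), HasDerivAt (fun u => Real.log (R u)) (f s) s := by
    intro s hs
    rw [huIcc] at hs
    have hs0 : 0 ≤ s := le_trans ht hs.1
    have hRs := hRpos s hs0
    have h := (hODE s hs0).log hRs.ne'
    convert h using 1
    field_simp
    ring
  -- continuity of f on [t, t+T]
  have hfc : ContinuousOn f (Set.uIcc t (t + T)) := by
    intro s hs
    rw [huIcc] at hs
    have hs0 : 0 ≤ s := le_trans ht hs.1
    have hRs := hRpos s hs0
    apply ContinuousAt.continuousWithinAt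
    have hRcont : ContinuousAt R s := (hODE s hs0).continuousAt
    have hP0 : ContinuousAt P0 (R s) := by
      have hsinh : Real.sinh (R s) ≠ 0 := (Real.sinh_pos_iff.2 hRs).ne'
      apply ContinuousAt.div
      · exact ((continuousAt_id.mul ((Real.continuous_cosh.continuousAt).div
          (Real.continuous_sinh.continuousAt) hsinh)).sub continuousAt_const)
      · exact (continuousAt_id.pow 2)
      · positivity
    have : ContinuousAt (fun u => Φ u * P0 (R u) - σ / 3) s :=
      ((hΦc.continuousAt).mul (hP0.comp hRcont)).sub continuousAt_const
    exact continuousAt_const.mul this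
  have hfint : IntervalIntegrable f MeasureTheory.volume t (t + T) :=
    hfc.intervalIntegrable
  have key := intervalIntegral.integral_eq_sub_of_hasDerivAt hL hfint
  -- compare f with g
  set g : ℝ → ℝ := fun s => μ / 3 * (Φ s - σ) with hg
  have hgint : IntervalIntegrable g MeasureTheory.volume t (t + T) := by
    apply Continuous.intervalIntegrable
    fun_prop
  have hmono : ∫ s in t..(t + T), f s ≤ ∫ s in t..(t + T), g s := by
    apply intervalIntegral.integral_mono_on htT hfint hgint
    intro s hs
    have hs0 : 0 ≤ s := le_trans ht hs.1
    have hP0 := P0_le_third (hRpos s hs0)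
    have hΦs := hΦpos s
    have : Φ s * P0 (R s) ≤ Φ s / 3 := by nlinarith
    simp only [hf, hg]
    nlinarith
  -- ∫ g = 0
  have hper : Function.Periodic Φ T := hΦper
  have hΦint : ∫ s in t..(t + T), Φ s = σ * T := by
    rw [hper.intervalIntegral_add_eq t 0]
    rw [zero_add]
    rw [hmean]
    field_simp
  have hgzero : ∫ s in t..(t + T), g s = 0 := by
    have : ∫ s in t..(t + T), g s
        = μ / 3 * ((∫ s in t..(t + T), Φ s) - (t + T - t) * σ) := by
      rw [hg]
      rw [intervalIntegral.integral_const_mul]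
      congr 1
      rw [intervalIntegral.integral_sub (hΦc.intervalIntegrable _ _)
        (intervalIntegrable_const)]
      simp [smul_eq_mul]
    rw [this, hΦint]
    ring
  have hlog : Real.log (R (t + T)) ≤ Real.log (R t) := by
    have := hmono.trans_eq hgzero
    rw [key] at this
    linarith
  have h1 := hRpos t ht
  have h2 := hRpos (t + T) (by linarith)
  exact (Real.log_le_log_iff h2 h1).1 hlog
end

section
/- Let Φ be continuous, positive, T-periodic with mean Φ̄ = (1/T)∫₀ᵀ Φ(t) dt, and suppose σ̃ = Φ̄. If R is a positive solution of R'(t) = μ R(t)(Φ(t) P₀(R(t)) − σ̃/3) with μ > 0, then liminf_{t→∞} R(t) = 0. -/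
open Real

private lemma aux_pos {f f' : ℝ → ℝ} (hd : ∀ x, HasDerivAt f (f' x) x) (h0 : f 0 = 0)
    (hf' : ∀ x, 0 < x → 0 < f' x) : ∀ x, 0 < x → 0 < f x := by
  have hmono : StrictMonoOn f (Set.Ici 0) := by
    apply strictMonoOn_of_deriv_pos (convex_Ici 0)
    · exact fun x _ => (hd x).differentiableAt.continuousAt.continuousWithinAt
    · intro x hx
      rw [interior_Ici] at hx
      rw [(hd x).deriv]; exact hf' x hx
  intro x hx
  have := hmono Set.self_mem_Ici (Set.mem_Ici.mpr hx.le) hx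
  rwa [h0] at this

private lemma aux_nonneg {f f' : ℝ → ℝ} (hd : ∀ x, HasDerivAt f (f' x) x) (h0 : f 0 = 0)
    (hf' : ∀ x, 0 < x → 0 ≤ f' x) : ∀ x, 0 ≤ x → 0 ≤ f x := by
  have hmono : MonotoneOn f (Set.Ici 0) := by
    apply monotoneOn_of_deriv_nonneg (convex_Ici 0)
    · exact fun x _ => (hd x).differentiableAt.continuousAt.continuousWithinAt
    · intro x hx
      exact (hd x).differentiableAt.differentiableWithinAt
    · intro x hx
      rw [interior_Ici] at hx
      rw [(hd x).deriv]; exact hf' x hx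
  intro x hx
  have := hmono Set.self_mem_Ici (Set.mem_Ici.mpr hx) hx
  rwa [h0] at this

private lemma L1 : ∀ x : ℝ, 0 < x → sinh x < x * cosh x := by
  have h := aux_pos (f := fun x => x * cosh x - sinh x) (f' := fun x => x * sinh x)
    (fun x => by
      exact (((hasDerivAt_id x).mul (Real.hasDerivAt_cosh x)).sub (Real.hasDerivAt_sinh x)).congr_deriv
        (by simp only [id_eq, one_mul]; ring))
    (by simp) (fun x hx => mul_pos hx (Real.sinh_pos_iff.mpr hx))
  intro x hx
  have := h x hx; linarith

private lemma L2 : ∀ x : ℝ, 0 < x → 3 * (x * cosh x - sinh x) < x ^ 2 * sinh x := by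
  have h := aux_pos (f := fun x => x ^ 2 * sinh x - 3 * (x * cosh x - sinh x))
    (f' := fun x => x * (x * cosh x - sinh x))
    (fun x => by
      have : HasDerivAt (fun x : ℝ => x ^ 2 * sinh x - 3 * (x * cosh x - sinh x))
          (2 * x ^ 1 * sinh x + x ^ 2 * cosh x -
            3 * ((1 * cosh x + x * sinh x) - cosh x)) x := by
        exact (((hasDerivAt_pow 2 x).mul (Real.hasDerivAt_sinh x)).sub
          (HasDerivAt.const_mul 3 (((hasDerivAt_id x).mul (Real.hasDerivAt_cosh x)).sub (Real.hasDerivAt_sinh x))))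
      convert this using 1; ring)
    (by simp) (fun x hx => mul_pos hx (by have := L1 x hx; linarith))
  intro x hx
  have := h x hx; linarith

private lemma Lg : ∀ x : ℝ, 0 ≤ x → 0 ≤ x ^ 2 + x * sinh x * cosh x - 2 * (sinh x) ^ 2 := by
  have hg1 : ∀ x : ℝ, 0 ≤ x →
      0 ≤ 2 * x + x * (cosh x) ^ 2 + x * (sinh x) ^ 2 - 3 * sinh x * cosh x := by
    apply aux_nonneg (f' := fun x => 2 - 2 * (cosh x) ^ 2 - 2 * (sinh x) ^ 2
      + 4 * x * sinh x * cosh x)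
    · intro x
      have h1 : HasDerivAt (fun x : ℝ => 2 * x + x * (cosh x) ^ 2 + x * (sinh x) ^ 2
          - 3 * sinh x * cosh x)
          (2 * 1 + (1 * (cosh x) ^ 2 + x * (2 * cosh x ^ 1 * sinh x))
            + (1 * (sinh x) ^ 2 + x * (2 * sinh x ^ 1 * cosh x))
            - (3 * (cosh x * cosh x) + 3 * sinh x * sinh x)) x := by
        exact ((((hasDerivAt_const x (2:ℝ)).mul (hasDerivAt_id x)).congr_deriv (by ring)).add
          ((hasDerivAt_id x).mul ((Real.hasDerivAt_cosh x).pow 2))).add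
          ((hasDerivAt_id x).mul ((Real.hasDerivAt_sinh x).pow 2)) |>.sub
          ((((hasDerivAt_sinh x).const_mul 3).mul (Real.hasDerivAt_cosh x)).congr_deriv (by ring))
      convert h1 using 1; ring
    · simp
    · intro x hx
      have h2 : 2 - 2 * (cosh x) ^ 2 - 2 * (sinh x) ^ 2 + 4 * x * sinh x * cosh x
          = 4 * sinh x * (x * cosh x - sinh x) := by
        nlinarith [Real.cosh_sq x]
      rw [h2]
      have := L1 x hx
      have hs := Real.sinh_pos_iff.mpr hx
      nlinarith
  apply aux_nonneg (f' := fun x => 2 * x + x * (cosh x) ^ 2 + x * (sinh x) ^ 2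
    - 3 * sinh x * cosh x)
  · intro x
    have h1 : HasDerivAt (fun x : ℝ => x ^ 2 + x * sinh x * cosh x - 2 * (sinh x) ^ 2)
        (2 * x ^ 1 + ((1 * sinh x + x * cosh x) * cosh x + x * sinh x * sinh x)
          - 2 * (2 * sinh x ^ 1 * cosh x)) x := by
      exact ((hasDerivAt_pow 2 x).add
        (((hasDerivAt_id x).mul (Real.hasDerivAt_sinh x)).mul (Real.hasDerivAt_cosh x))).sub
        (((Real.hasDerivAt_sinh x).pow 2).const_mul 2)
    convert h1 using 1
    ring
  · simp
  · exact fun x hx => hg1 x hx.le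

private noncomputable def Q (x : ℝ) : ℝ := (x * cosh x - sinh x) / (x ^ 2 * sinh x)

private lemma P0_eq_Q {x : ℝ} (hx : 0 < x) : P0 x = Q x := by
  have hs : sinh x ≠ 0 := (Real.sinh_pos_iff.mpr hx).ne'
  have hx0 : x ≠ 0 := hx.ne'
  unfold P0 Q
  have hd : x ^ 2 * sinh x ≠ 0 := by positivity
  rw [div_eq_div_iff (by positivity) hd]
  field_simp

private lemma Q_hasDerivAt {x : ℝ} (hx : 0 < x) :
    HasDerivAt Q ((x * sinh x * (x ^ 2 * sinh x) -
      (x * cosh x - sinh x) * (2 * x ^ 1 * sinh x + x ^ 2 * cosh x)) / (x ^ 2 * sinh x) ^ 2) x := by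
  have hs : (0:ℝ) < sinh x := Real.sinh_pos_iff.mpr hx
  have hden : x ^ 2 * sinh x ≠ 0 := by positivity
  have hN : HasDerivAt (fun x : ℝ => x * cosh x - sinh x) (x * sinh x) x := by
    have := ((hasDerivAt_id x).mul (Real.hasDerivAt_cosh x)).sub (Real.hasDerivAt_sinh x)
    exact this.congr_deriv (by simp only [id_eq, one_mul]; ring)
  have hD : HasDerivAt (fun x : ℝ => x ^ 2 * sinh x) (2 * x ^ 1 * sinh x + x ^ 2 * cosh x) x :=
    (hasDerivAt_pow 2 x).mul (Real.hasDerivAt_sinh x)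
  exact hN.div hD hden

private lemma Q_anti : AntitoneOn Q (Set.Ioi 0) := by
  have hder : ∀ x ∈ Set.Ioi (0:ℝ), deriv Q x ≤ 0 := by
    intro x hx
    have hx : (0:ℝ) < x := hx
    rw [(Q_hasDerivAt hx).deriv]
    apply div_nonpos_of_nonpos_of_nonneg
    · have hg := Lg x hx.le
      have hc := Real.cosh_sq x
      have hnum : x * sinh x * (x ^ 2 * sinh x) -
          (x * cosh x - sinh x) * (2 * x ^ 1 * sinh x + x ^ 2 * cosh x)
          = -(x * (x ^ 2 + x * sinh x * cosh x - 2 * sinh x ^ 2)) := by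
        linear_combination (-(x ^ 3)) * hc
      rw [hnum, neg_nonpos]
      exact mul_nonneg hx.le hg
    · positivity
  apply antitoneOn_of_deriv_nonpos (convex_Ioi 0)
  · exact fun x hx => (Q_hasDerivAt hx).differentiableAt.continuousAt.continuousWithinAt
  · rw [interior_Ioi]
    exact fun x hx => (Q_hasDerivAt hx).differentiableAt.differentiableWithinAt
  · rwa [interior_Ioi]

private lemma P0_lt_third {x : ℝ} (hx : 0 < x) : P0 x < 1 / 3 := by
  rw [P0_eq_Q hx]
  have hs : (0:ℝ) < sinh x := Real.sinh_pos_iff.mpr hx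
  have h2 := L2 x hx
  rw [Q, div_lt_iff₀ (by positivity)]
  nlinarith

theorem R_liminf_zero
    (T : ℝ) (hT : 0 < T) (Φ : ℝ → ℝ) (hΦc : Continuous Φ)
    (hΦpos : ∀ t, 0 < Φ t) (hΦper : ∀ t, Φ (t + T) = Φ t)
    (μ σ : ℝ) (hμ : 0 < μ)
    (hmean : σ = (1 / T) * ∫ t in (0 : ℝ)..T, Φ t)
    (R : ℝ → ℝ) (hRpos : ∀ t, 0 ≤ t → 0 < R t)
    (hODE : ∀ t, 0 ≤ t → HasDerivAt R (μ * R t * (Φ t * P0 (R t) - σ / 3)) t) :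
    Filter.liminf R Filter.atTop = 0 := by
  have hσpos : 0 < σ := by
    rw [hmean]
    have hint : 0 < ∫ t in (0:ℝ)..T, Φ t :=
      intervalIntegral.intervalIntegral_pos_of_pos (hΦc.intervalIntegrable _ _) hΦpos hT
    exact mul_pos (one_div_pos.mpr hT) hint
  set F : ℝ → ℝ := fun t => ∫ s in (0:ℝ)..t, (Φ s - σ) with hFdef
  have hΦσc : Continuous (fun s => Φ s - σ) := hΦc.sub continuous_const
  have hFd : ∀ t, HasDerivAt F (Φ t - σ) t := fun t =>
    (hΦσc.integral_hasStrictDerivAt 0 t).hasDerivAt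
  have hFc : Continuous F :=
    continuous_iff_continuousAt.mpr fun t => (hFd t).differentiableAt.continuousAt
  have hper : Function.Periodic (fun s => Φ s - σ) T := fun t => by simp [hΦper t]
  have hFper : Function.Periodic F T := by
    intro t
    have h1 : (∫ s in (0:ℝ)..(t+T), (Φ s - σ))
        = (∫ s in (0:ℝ)..t, (Φ s - σ)) + ∫ s in t..(t+T), (Φ s - σ) :=
      (intervalIntegral.integral_add_adjacent_intervals
        (hΦσc.intervalIntegrable _ _) (hΦσc.intervalIntegrable _ _)).symm
    have h2 : (∫ s in t..(t+T), (Φ s - σ)) = ∫ s in (0:ℝ)..(0+T), (Φ s - σ) :=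
      hper.intervalIntegral_add_eq t 0
    have h3 : (∫ s in (0:ℝ)..(0+T), (Φ s - σ)) = 0 := by
      rw [zero_add, intervalIntegral.integral_sub (hΦc.intervalIntegrable _ _)
        intervalIntegrable_const, intervalIntegral.integral_const]
      rw [hmean]
      field_simp
      rw [sub_zero, smul_eq_mul, mul_div_cancel₀ _ hT.ne', sub_self]
    show F (t + T) = F t
    simp only [hFdef]
    rw [h1, h2, h3, add_zero]
  obtain ⟨B, hB⟩ : ∃ B : ℝ, ∀ t, |F t| ≤ B := by
    have hbd := hFper.isBounded_of_continuous hT.ne' hFc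
    obtain ⟨C, hC⟩ := isBounded_iff_forall_norm_le.mp hbd
    exact ⟨C, fun t => by simpa [Real.norm_eq_abs] using hC (F t) (Set.mem_range_self t)⟩
  have hB0 : 0 ≤ B := le_trans (abs_nonneg _) (hB 0)
  -- key claim
  have hkey : ∀ ε : ℝ, 0 < ε → ∃ᶠ t in Filter.atTop, R t ≤ ε := by
    intro ε hε
    rw [Filter.frequently_atTop]
    by_contra hcon
    push_neg at hcon
    obtain ⟨a, ha⟩ := hcon
    set t₀ := max a 0 with ht₀def
    have ht₀0 : (0:ℝ) ≤ t₀ := le_max_right a 0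
    set c := P0 ε with hcdef
    have hclt : c < 1/3 := P0_lt_third hε
    have hRgt : ∀ t, t₀ ≤ t → ε < R t := fun t ht =>
      ha t (le_trans (le_max_left a 0) ht)
    have hPle : ∀ t, t₀ ≤ t → P0 (R t) ≤ c := by
      intro t ht
      have hRt : ε < R t := hRgt t ht
      rw [hcdef, P0_eq_Q hε, P0_eq_Q (hε.trans hRt)]
      exact Q_anti (Set.mem_Ioi.mpr hε) (Set.mem_Ioi.mpr (hε.trans hRt)) hRt.le
    set k : ℝ := μ * σ * (c - 1/3) with hkdef
    have hk : k < 0 := mul_neg_of_pos_of_neg (mul_pos hμ hσpos) (by linarith)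
    set G : ℝ → ℝ := fun t => Real.log (R t) - μ * c * F t - k * t with hGdef
    have hGd : ∀ t, 0 ≤ t → HasDerivAt G
        (μ * (Φ t * P0 (R t) - σ / 3) - μ * c * (Φ t - σ) - k) t := by
      intro t ht
      have hlog : HasDerivAt (fun t => Real.log (R t))
          ((μ * R t * (Φ t * P0 (R t) - σ / 3)) / R t) t :=
        (hODE t ht).log (hRpos t ht).ne'
      have hlog' : HasDerivAt (fun t => Real.log (R t))
          (μ * (Φ t * P0 (R t) - σ / 3)) t := by
        convert hlog using 1
        field_simp [(hRpos t ht).ne']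
      have hlin : HasDerivAt (fun t : ℝ => k * t) k t := by
        simpa using (hasDerivAt_id t).const_mul k
      exact (hlog'.sub ((hFd t).const_mul (μ * c))).sub hlin
    have hGanti : AntitoneOn G (Set.Ici t₀) := by
      apply antitoneOn_of_deriv_nonpos (convex_Ici t₀)
      · exact fun t ht =>
          (hGd t (ht₀0.trans ht)).differentiableAt.continuousAt.continuousWithinAt
      · rw [interior_Ici]
        exact fun t ht =>
          (hGd t (ht₀0.trans ht.le)).differentiableAt.differentiableWithinAt
      · rw [interior_Ici]
        intro t ht
        rw [(hGd t (ht₀0.trans ht.le)).deriv]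
        have hP := hPle t ht.le
        have hΦt := hΦpos t
        have hexp : μ * (Φ t * P0 (R t) - σ / 3) - μ * c * (Φ t - σ) - k
            = μ * Φ t * (P0 (R t) - c) := by
          rw [hkdef]; ring
        rw [hexp]
        exact mul_nonpos_of_nonneg_of_nonpos (mul_pos hμ hΦt).le (sub_nonpos.mpr hP)
    -- pick a large time
    set M : ℝ := (Real.log (R t₀) + μ * |c| * (2 * B) + 1 - Real.log ε) / (-k) with hMdef
    have hεt₀ : ε < R t₀ := hRgt t₀ le_rfl
    have hlogle : Real.log ε < Real.log (R t₀) := Real.log_lt_log hε hεt₀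
    have hM0 : 0 ≤ M := by
      apply div_nonneg _ (by linarith)
      have : 0 ≤ μ * |c| * (2 * B) := by positivity
      linarith
    set t := t₀ + M with htdef
    have htt₀ : t₀ ≤ t := by rw [htdef]; linarith
    have hGle : G t ≤ G t₀ := hGanti Set.self_mem_Ici (Set.mem_Ici.mpr htt₀) htt₀
    have hFb : μ * c * (F t - F t₀) ≤ μ * |c| * (2 * B) := by
      calc μ * c * (F t - F t₀) ≤ |μ * c * (F t - F t₀)| := le_abs_self _
        _ = μ * |c| * |F t - F t₀| := by
            rw [abs_mul, abs_mul, abs_of_pos hμ]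
        _ ≤ μ * |c| * (2 * B) := by
            apply mul_le_mul_of_nonneg_left _ (by positivity)
            calc |F t - F t₀| ≤ |F t| + |F t₀| := abs_sub _ _
              _ ≤ 2 * B := by have := hB t; have := hB t₀; linarith
    have hkM : k * t - k * t₀
        = -(Real.log (R t₀) + μ * |c| * (2 * B) + 1 - Real.log ε) := by
      have h1 : k * t - k * t₀ = k * M := by rw [htdef]; ring
      rw [h1, hMdef, div_neg, mul_neg, mul_div_assoc', mul_div_cancel_left₀ _ hk.ne]
    have hGt : G t = Real.log (R t) - μ * c * F t - k * t := rfl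
    have hGt₀ : G t₀ = Real.log (R t₀) - μ * c * F t₀ - k * t₀ := rfl
    have hfinal : Real.log (R t) ≤ Real.log ε - 1 := by
      rw [hGt, hGt₀] at hGle
      nlinarith [hFb, hkM]
    have : Real.log ε < Real.log (R t) := Real.log_lt_log hε (hRgt t htt₀)
    linarith
  -- conclude about liminf
  have h0le : ∀ᶠ t in Filter.atTop, (0:ℝ) ≤ R t :=
    Filter.eventually_atTop.mpr ⟨0, fun t ht => (hRpos t ht).le⟩
  have hbdd : Filter.IsBoundedUnder (· ≥ ·) Filter.atTop R :=
    ⟨0, by simpa [Filter.eventually_map] using h0le⟩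
  have hcob : Filter.IsCoboundedUnder (· ≥ ·) Filter.atTop R :=
    Filter.IsCoboundedUnder.of_frequently_le (hkey 1 one_pos)
  refine le_antisymm ?_ (Filter.le_liminf_of_le hcob h0le)
  by_contra hlt
  push_neg at hlt
  have h2 : Filter.liminf R Filter.atTop ≤ Filter.liminf R Filter.atTop / 2 :=
    Filter.liminf_le_of_frequently_le (hkey _ (by linarith)) hbdd
  linarith
end
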